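/- Let n ≥ 3 be an odd integer and q > 0 a real number. The vector ẽ^q_1 = Σ_{(X′,X″)∈Ω_1} (−q)^{I_1(X′)} e_{X′} ⊗ e_{X″} ∈ S ⊗ S satisfies (X_i ⊗ K_i^{−1/2} + K_i^{1/2} ⊗ X_i)(ẽ^q_1) = 0 for every i ∈ {1,…,n}; that is, ẽ^q_1 is a highest weight vector of weight L_1 for the action of U_q(so_{2n}) on U₊ ⊗ U₊. -/

import Mathlib

open scoped TensorProduct Classical

noncomputable section

/-- Subsets of `{1,…,n}`, the index set for the basis of the spinor space `S`. -/
abbrev SIdx (n : ℕ) : Type := {X : Finset ℕ // X ∈ (Finset.Icc 1 n).powerset}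

/-- The spinor space `S`, with basis `(e_X)` indexed by subsets of `{1,…,n}`. -/
abbrev Sp (n : ℕ) : Type := SIdx n → ℂ

/-- The basis vector `e_X`. -/
def eB (n : ℕ) (X : SIdx n) : Sp n := Pi.single X 1

/-- `I₁(X) = Σ_{k∈X} k − |X|·n`. -/
def I1 (n : ℕ) (X : Finset ℕ) : ℤ := (∑ k ∈ X, (k : ℤ)) - X.card * n

/-- `I_i(X) = I₁(X) + |{k ∈ X : k < i}| − (i−1)`. -/
def Ilow (n i : ℕ) (X : Finset ℕ) : ℤ :=
  I1 n X + ((X.filter (fun k => k < i)).card : ℤ) - ((i : ℤ) - 1)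

/-- `I_{n+i}(X) = I₁(X) + |{k ∈ X : k < i}| − (n−1)`. -/
def Ihigh (n i : ℕ) (X : Finset ℕ) : ℤ :=
  I1 n X + ((X.filter (fun k => k < i)).card : ℤ) - ((n : ℤ) - 1)

def eraseIdx (n : ℕ) (X : SIdx n) (i : ℕ) : SIdx n :=
  ⟨(X : Finset ℕ).erase i,
    Finset.mem_powerset.2 ((Finset.erase_subset _ _).trans (Finset.mem_powerset.1 X.2))⟩

def insertIdx (n : ℕ) (X : SIdx n) (i : ℕ) (h : i ∈ Finset.Icc 1 n) : SIdx n :=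
  ⟨insert i (X : Finset ℕ),
    Finset.mem_powerset.2 (Finset.insert_subset h (Finset.mem_powerset.1 X.2))⟩

/-- The creation operator `a_i†`: `a_i† e_X = (−1)^{|{k ∈ X : k < i}|} e_{X∪{i}}` if `i ∉ X`,
and `a_i† e_X = 0` otherwise. -/
def adag (n i : ℕ) : Sp n →ₗ[ℂ] Sp n where
  toFun f := fun X =>
    if i ∈ (X : Finset ℕ) then
      ((-1 : ℂ) ^ ((((X : Finset ℕ).erase i).filter (fun k => k < i)).card)) *
        f (eraseIdx n X i)
    else 0
  map_add' f g := by
    funext X; by_cases h : i ∈ (X : Finset ℕ) <;> simp [h] <;> ring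
  map_smul' a f := by
    funext X; by_cases h : i ∈ (X : Finset ℕ) <;> simp [h] <;> ring

/-- The annihilation operator `a_i`: `a_i e_X = (−1)^{|{k ∈ X : k < i}|} e_{X∖{i}}` if `i ∈ X`,
and `a_i e_X = 0` otherwise. -/
def aop (n i : ℕ) : Sp n →ₗ[ℂ] Sp n where
  toFun f := fun X =>
    if h : i ∈ Finset.Icc 1 n ∧ i ∉ (X : Finset ℕ) then
      ((-1 : ℂ) ^ (((insert i (X : Finset ℕ)).filter (fun k => k < i)).card)) *
        f (insertIdx n X i h.1)
    else 0
  map_add' f g := by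
    funext X
    by_cases h : i ∈ Finset.Icc 1 n ∧ i ∉ (X : Finset ℕ)
    · simp only [dif_pos h, Pi.add_apply, mul_add]
    · simp only [dif_neg h, Pi.add_apply, add_zero]
  map_smul' a f := by
    funext X
    by_cases h : i ∈ Finset.Icc 1 n ∧ i ∉ (X : Finset ℕ)
    · simp only [dif_pos h, Pi.smul_apply, smul_eq_mul, RingHom.id_apply]
      ring
    · simp only [dif_neg h, Pi.smul_apply, smul_eq_mul, RingHom.id_apply, mul_zero]

/-- The raising Chevalley generator: `X_i = −a_{i+1} a_i†` for `1 ≤ i ≤ n−1` and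
`X_n = a_n† a_{n−1}†`. -/
def Xop (n i : ℕ) : Sp n →ₗ[ℂ] Sp n :=
  if i = n then (adag n n).comp (adag n (n - 1))
  else -((aop n (i + 1)).comp (adag n i))

/-- The lowering Chevalley generator: `Y_i = −a_i a_{i+1}†` for `1 ≤ i ≤ n−1` and
`Y_n = a_n a_{n−1}`. -/
def Yop (n i : ℕ) : Sp n →ₗ[ℂ] Sp n :=
  if i = n then (aop n n).comp (aop n (n - 1))
  else -((aop n i).comp (adag n (i + 1)))

/-- `ẽ_i = Σ_{(X′,X″)∈Ω_i} σ_i(X′) e_{X′} ⊗ e_{X″}`, where `Ω_i` consists of pairs with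
`X′ ∪ X″ = {1,…,n}`, `X′ ∩ X″ = {i}`, `|X′|` odd, and `σ_i(X) = (−1)^{I_i(X)}`. -/
def eTlow (n i : ℕ) : Sp n ⊗[ℂ] Sp n :=
  ∑ p ∈ Finset.univ.filter (fun p : SIdx n × SIdx n =>
      (p.1 : Finset ℕ) ∪ (p.2 : Finset ℕ) = Finset.Icc 1 n ∧
      (p.1 : Finset ℕ) ∩ (p.2 : Finset ℕ) = {i} ∧ Odd (p.1 : Finset ℕ).card),
    ((-1 : ℂ) ^ (Ilow n i (p.1 : Finset ℕ))) • (eB n p.1 ⊗ₜ[ℂ] eB n p.2)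

/-- `ẽ_{n+i} = (−1)^i Σ_{(X′,X″)∈Ω_{n+i}} σ_{n+i}(X′) e_{X′} ⊗ e_{X″}`, where `Ω_{n+i}`
consists of pairs of disjoint sets with `X′ ∪ X″ = {1,…,n} ∖ {i}` and `|X′|` odd, and
`σ_{n+i}(X) = (−1)^{I_{n+i}(X)}`. -/
def eThigh (n i : ℕ) : Sp n ⊗[ℂ] Sp n :=
  ((-1 : ℂ) ^ i) •
    ∑ p ∈ Finset.univ.filter (fun p : SIdx n × SIdx n =>
        (p.1 : Finset ℕ) ∪ (p.2 : Finset ℕ) = (Finset.Icc 1 n) \ {i} ∧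
        Disjoint (p.1 : Finset ℕ) (p.2 : Finset ℕ) ∧ Odd (p.1 : Finset ℕ).card),
      ((-1 : ℂ) ^ (Ihigh n i (p.1 : Finset ℕ))) • (eB n p.1 ⊗ₜ[ℂ] eB n p.2)

/-- The vector representation `V = ℂ^{2n}`; the coordinate `x` corresponds to the basis
vector `u_{x+1}` (1-based indexing). -/
abbrev Vsp (n : ℕ) : Type := Fin (2 * n) → ℂ

/-- The basis vector `u_j` of `V` (1-based). -/
def uB (n j : ℕ) : Vsp n := fun x => if (x : ℕ) + 1 = j then 1 else 0

/-- The `l`-th coordinate functional on `V` (1-based). -/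
def coordL (n l : ℕ) : Vsp n →ₗ[ℂ] ℂ where
  toFun f := ∑ x : Fin (2 * n), (if (x : ℕ) + 1 = l then 1 else 0) * f x
  map_add' f g := by simp [mul_add, Finset.sum_add_distrib]
  map_smul' a f := by
    simp only [Pi.smul_apply, smul_eq_mul, RingHom.id_apply, Finset.mul_sum]
    exact Finset.sum_congr rfl fun x _ => by ring

/-- The matrix unit `E_{kl}`, acting by `E_{kl} u_m = δ_{lm} u_k`. -/
def matUnit (n k l : ℕ) : Vsp n →ₗ[ℂ] Vsp n := (coordL n l).smulRight (uB n k)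

/-- The raising generator on `V`: `X_i = E_{i,i+1} − E_{n+i+1,n+i}` for `1 ≤ i ≤ n−1` and
`X_n = E_{n−1,2n} − E_{n,2n−1}`. -/
def XV (n i : ℕ) : Vsp n →ₗ[ℂ] Vsp n :=
  if i = n then matUnit n (n - 1) (2 * n) - matUnit n n (2 * n - 1)
  else matUnit n i (i + 1) - matUnit n (n + i + 1) (n + i)

/-- The lowering generator on `V`: `Y_i = E_{i+1,i} − E_{n+i,n+i+1}` for `1 ≤ i ≤ n−1` and
`Y_n = E_{2n−1,n} − E_{2n,n−1}`. -/
def YV (n i : ℕ) : Vsp n →ₗ[ℂ] Vsp n :=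
  if i = n then matUnit n (2 * n - 1) n - matUnit n (2 * n) (n - 1)
  else matUnit n (i + 1) i - matUnit n (n + i) (n + i + 1)

/-- `h_i(X)`: the eigenvalue of the coroot `H_i` on the weight vector `e_X`. -/
def hS (n i : ℕ) (X : Finset ℕ) : ℤ :=
  if i = n then (if n - 1 ∈ X then (1 : ℤ) else 0) + (if n ∈ X then (1 : ℤ) else 0) - 1
  else (if i ∈ X then (1 : ℤ) else 0) - (if i + 1 ∈ X then (1 : ℤ) else 0)

/-- The operator `K_i^{±1/2}` on `S`, acting on `e_X` by `q^{±h_i(X)/2}`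
(`ε = 1` gives `K_i^{1/2}`, `ε = −1` gives `K_i^{−1/2}`). -/
def Khalf (n : ℕ) (q : ℝ) (i : ℕ) (ε : ℤ) : Sp n →ₗ[ℂ] Sp n where
  toFun f := fun X => ((q ^ ((((ε * hS n i (X : Finset ℕ)) : ℤ) : ℝ) / 2) : ℝ) : ℂ) * f X
  map_add' f g := by funext X; simp [mul_add]
  map_smul' a f := by funext X; simp; ring

/-- `ẽ^q₁ = Σ_{(X′,X″)∈Ω₁} (−q)^{I₁(X′)} e_{X′} ⊗ e_{X″}`. -/
def e1tildeQ (n : ℕ) (q : ℝ) : Sp n ⊗[ℂ] Sp n :=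
  ∑ p ∈ Finset.univ.filter (fun p : SIdx n × SIdx n =>
      (p.1 : Finset ℕ) ∪ (p.2 : Finset ℕ) = Finset.Icc 1 n ∧
      (p.1 : Finset ℕ) ∩ (p.2 : Finset ℕ) = {1} ∧ Odd (p.1 : Finset ℕ).card),
    ((-(q : ℂ)) ^ (I1 n (p.1 : Finset ℕ))) • (eB n p.1 ⊗ₜ[ℂ] eB n p.2)

section Lemmas

variable {n : ℕ}

lemma subset_of_memS (X : SIdx n) : (X : Finset ℕ) ⊆ Finset.Icc 1 n :=
  Finset.mem_powerset.1 X.2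

lemma eB_apply (X A : SIdx n) : eB n X A = if A = X then 1 else 0 := by
  simp [eB, Pi.single_apply]



/-- Key formula: `X_i e_X = e_{(X∖{i+1})∪{i}}` when `i∉X`, `i+1∈X`, `1≤i<n`. -/
lemma Xop_low (i : ℕ) (hi1 : 1 ≤ i) (hin : i < n) (X : SIdx n)
    (hX : i ∉ (X : Finset ℕ)) (hX1 : i + 1 ∈ (X : Finset ℕ)) :
    Xop n i (eB n X) = eB n ⟨insert i ((X : Finset ℕ).erase (i+1)),
      Finset.mem_powerset.2 (Finset.insert_subset (by simp [Finset.mem_Icc]; omega)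
        ((Finset.erase_subset _ _).trans (subset_of_memS X)))⟩ := by
  have hin' : i ≠ n := by omega
  rw [Xop, if_neg hin']
  funext A
  rw [eB_apply]
  simp only [LinearMap.neg_apply, LinearMap.comp_apply, aop, adag, LinearMap.coe_mk,
    AddHom.coe_mk, Pi.neg_apply]
  by_cases hA : (i + 1) ∈ Finset.Icc 1 n ∧ (i + 1) ∉ (A : Finset ℕ)
  · rw [dif_pos hA]
    by_cases hiA : i ∈ (A : Finset ℕ)
    · have hmem : i ∈ ((insertIdx n A (i+1) hA.1 : SIdx n) : Finset ℕ) := by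
        simp [insertIdx, hiA]
      rw [if_pos hmem]
      have hset : ((insertIdx n A (i+1) hA.1 : SIdx n) : Finset ℕ).erase i
          = insert (i+1) ((A : Finset ℕ).erase i) := by
        simp only [insertIdx]
        exact Finset.erase_insert_of_ne (by omega)
      -- the delta factor
      rw [eB_apply]
      by_cases key : (A : Finset ℕ) = insert i ((X : Finset ℕ).erase (i+1))
      · rw [if_pos, if_pos (Subtype.ext key)]
        · -- sign computation
          have e1 : (Finset.filter (fun k => k < i + 1)
              (insert (i+1) (A : Finset ℕ))).card
              = (Finset.filter (fun k => k < i) (A : Finset ℕ)).card + 1 := by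
            rw [Finset.filter_insert, if_neg (by omega)]
            have : Finset.filter (fun k => k < i + 1) (A : Finset ℕ)
                = insert i (Finset.filter (fun k => k < i) (A : Finset ℕ)) := by
              ext k
              simp only [Finset.mem_filter, Finset.mem_insert]
              constructor
              · rintro ⟨hk, hk2⟩
                rcases Nat.lt_or_ge k i with h | h
                · exact Or.inr ⟨hk, h⟩
                · exact Or.inl (by omega)
              · rintro (rfl | ⟨hk, hk2⟩)
                · exact ⟨hiA, by omega⟩
                · exact ⟨hk, by omega⟩
            rw [this, Finset.card_insert_of_notMem (by simp)]
          have e2 : (Finset.filter (fun k => k < i)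
              (((insertIdx n A (i+1) hA.1 : SIdx n) : Finset ℕ).erase i)).card
              = (Finset.filter (fun k => k < i) (A : Finset ℕ)).card := by
            rw [hset, Finset.filter_insert, if_neg (by omega)]
            congr 1
            ext k
            simp only [Finset.mem_filter, Finset.mem_erase]
            constructor
            · rintro ⟨⟨_, hk⟩, hk2⟩; exact ⟨hk, hk2⟩
            · rintro ⟨hk, hk2⟩; exact ⟨⟨by omega, hk⟩, hk2⟩
          rw [e1, e2]
          generalize (Finset.filter (fun k => k < i) (A : Finset ℕ)).card = m
          rw [pow_succ]
          ring_nf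
          rw [mul_comm m 2, pow_mul]
          norm_num
        · -- eraseIdx (insertIdx A (i+1)) i = X
          apply Subtype.ext
          show ((insertIdx n A (i+1) hA.1 : SIdx n) : Finset ℕ).erase i = (X : Finset ℕ)
          rw [hset, key]
          ext k
          simp only [Finset.mem_insert, Finset.mem_erase]
          constructor
          · rintro (rfl | ⟨hk, (rfl | ⟨hk2, hk3⟩)⟩)
            · exact hX1
            · omega
            · exact hk3
          · intro hk
            by_cases h1 : k = i + 1
            · exact Or.inl h1
            · exact Or.inr ⟨by rintro rfl; exact hX hk, Or.inr ⟨h1, hk⟩⟩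
      · rw [if_neg, if_neg (fun hc => key (congrArg Subtype.val hc)), mul_zero, mul_zero,
          neg_zero]
        -- eraseIdx ≠ X
        intro hcon
        apply key
        have hc : ((insertIdx n A (i+1) hA.1 : SIdx n) : Finset ℕ).erase i
            = (X : Finset ℕ) := congrArg Subtype.val hcon
        rw [hset] at hc
        show (A : Finset ℕ) = insert i ((X : Finset ℕ).erase (i+1))
        rw [← hc]
        ext k
        simp only [Finset.mem_insert, Finset.mem_erase]
        constructor
        · intro hk
          by_cases h1 : k = i
          · exact Or.inl h1
          · exact Or.inr ⟨by rintro rfl; exact hA.2 hk, Or.inr ⟨h1, hk⟩⟩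
        · rintro (rfl | ⟨hk, (rfl | ⟨hk2, hk3⟩)⟩)
          · exact hiA
          · exact absurd rfl hk
          · exact hk3
    · rw [if_neg (by
          simp only [insertIdx, Finset.mem_insert]
          push_neg
          exact ⟨by omega, hiA⟩), mul_zero, neg_zero, eq_comm, if_neg]
      intro hcon
      have : i ∈ (A : Finset ℕ) := by
        have := congrArg Subtype.val hcon
        rw [this]; simp
      exact hiA this
  · rw [dif_neg hA, neg_zero, eq_comm, if_neg]
    intro hcon
    apply hA
    refine ⟨by simp [Finset.mem_Icc]; omega, ?_⟩
    have := congrArg Subtype.val hcon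
    rw [this]
    simp only [Finset.mem_insert, Finset.mem_erase]
    push_neg
    exact ⟨by omega, fun h => absurd rfl h⟩

end Lemmas
section Lemmas2

variable {n : ℕ}

lemma coe_eraseIdx (X : SIdx n) (i : ℕ) :
    ((eraseIdx n X i : SIdx n) : Finset ℕ) = (X : Finset ℕ).erase i := rfl

lemma coe_insertIdx (X : SIdx n) (i : ℕ) (h : i ∈ Finset.Icc 1 n) :
    ((insertIdx n X i h : SIdx n) : Finset ℕ) = insert i (X : Finset ℕ) := rfl

lemma Xop_low_zero (i : ℕ) (hin : i < n) (X : SIdx n)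
    (h : i ∈ (X : Finset ℕ) ∨ i + 1 ∉ (X : Finset ℕ)) :
    Xop n i (eB n X) = 0 := by
  rw [Xop, if_neg (by omega : i ≠ n)]
  funext A
  simp only [LinearMap.neg_apply, LinearMap.comp_apply, aop, adag, LinearMap.coe_mk,
    AddHom.coe_mk, Pi.neg_apply, Pi.zero_apply, coe_insertIdx, coe_eraseIdx]
  by_cases hA : (i + 1) ∈ Finset.Icc 1 n ∧ (i + 1) ∉ (A : Finset ℕ)
  · rw [dif_pos hA]
    by_cases hmem : i ∈ insert (i+1) (A : Finset ℕ)
    · simp only [hmem, ↓reduceIte]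
      rw [eB_apply, if_neg, mul_zero, mul_zero, neg_zero]
      intro hcon
      have hc : (insert (i+1) (A : Finset ℕ)).erase i = (X : Finset ℕ) := by
        have := congrArg Subtype.val hcon
        simpa [coe_eraseIdx, coe_insertIdx] using this
      rcases h with h | h
      · apply (Finset.notMem_erase i (insert (i+1) (A : Finset ℕ)))
        rw [hc]; exact h
      · apply h; rw [← hc]
        rw [Finset.erase_insert_of_ne (by omega)]
        simp
    · simp only [hmem, ↓reduceIte]
      rw [mul_zero, neg_zero]
  · rw [dif_neg hA, neg_zero]

lemma Xop_top (hn : 3 ≤ n) (X : SIdx n)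
    (h1 : n - 1 ∉ (X : Finset ℕ)) (h2 : n ∉ (X : Finset ℕ)) :
    Xop n n (eB n X) = -eB n ⟨insert (n-1) (insert n (X : Finset ℕ)),
      Finset.mem_powerset.2 (Finset.insert_subset (by simp [Finset.mem_Icc]; omega)
        (Finset.insert_subset (by simp [Finset.mem_Icc]; omega) (subset_of_memS X)))⟩ := by
  rw [Xop, if_pos rfl]
  funext A
  rw [Pi.neg_apply, eB_apply]
  simp only [LinearMap.comp_apply, adag, LinearMap.coe_mk, AddHom.coe_mk, coe_eraseIdx]
  by_cases hnA : n ∈ (A : Finset ℕ)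
  · rw [if_pos hnA]
    by_cases hn1A : n - 1 ∈ (A : Finset ℕ).erase n
    · simp only [hn1A, ↓reduceIte]
      rw [eB_apply]
      have hn1A' : n - 1 ∈ (A : Finset ℕ) := Finset.mem_of_mem_erase hn1A
      by_cases key : (A : Finset ℕ) = insert (n-1) (insert n (X : Finset ℕ))
      · rw [if_pos, if_pos (Subtype.ext key)]
        · -- sign
          have hsub := subset_of_memS A
          have e1 : Finset.filter (fun k => k < n) ((A : Finset ℕ).erase n)
              = (A : Finset ℕ).erase n := by
            apply Finset.filter_true_of_mem
            intro k hk
            have := hsub (Finset.mem_of_mem_erase hk)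
            simp only [Finset.mem_Icc] at this
            have := Finset.ne_of_mem_erase hk
            omega
          have e2 : Finset.filter (fun k => k < n - 1)
              (((A : Finset ℕ).erase n).erase (n-1))
              = ((A : Finset ℕ).erase n).erase (n-1) := by
            apply Finset.filter_true_of_mem
            intro k hk
            have h3 := Finset.ne_of_mem_erase hk
            have h4 := Finset.ne_of_mem_erase (Finset.mem_of_mem_erase hk)
            have := hsub (Finset.mem_of_mem_erase (Finset.mem_of_mem_erase hk))
            simp only [Finset.mem_Icc] at this
            omega
          have c1 : ((A : Finset ℕ).erase n).card = (A : Finset ℕ).card - 1 :=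
            Finset.card_erase_of_mem hnA
          have c2 : (((A : Finset ℕ).erase n).erase (n-1)).card
              = (A : Finset ℕ).card - 2 := by
            rw [Finset.card_erase_of_mem hn1A, c1]
            omega
          have hcard : 2 ≤ (A : Finset ℕ).card := by
            have hss : ({n - 1, n} : Finset ℕ) ⊆ (A : Finset ℕ) := by
              intro k hk
              simp only [Finset.mem_insert, Finset.mem_singleton] at hk
              rcases hk with rfl | rfl
              · exact hn1A'
              · exact hnA
            have := Finset.card_le_card hss
            rwa [Finset.card_insert_of_notMem (by simp; omega),
              Finset.card_singleton] at this
          rw [e1, e2, c1, c2, mul_one, ← pow_add]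
          have hodd : Odd ((A : Finset ℕ).card - 1 + ((A : Finset ℕ).card - 2)) :=
            ⟨(A : Finset ℕ).card - 2, by omega⟩
          rw [hodd.neg_one_pow]
        · apply Subtype.ext
          show (((A : Finset ℕ).erase n).erase (n-1)) = (X : Finset ℕ)
          rw [key, Finset.erase_insert_of_ne (by omega : n - 1 ≠ n),
            Finset.erase_insert h2, Finset.erase_insert h1]
      · rw [if_neg, if_neg (fun hc => key (congrArg Subtype.val hc)), mul_zero, mul_zero,
          neg_zero]
        intro hcon
        apply key
        have hc : (((A : Finset ℕ).erase n).erase (n-1)) = (X : Finset ℕ) := by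
          have := congrArg Subtype.val hcon
          simpa [coe_eraseIdx] using this
        ext k
        rw [← hc]
        simp only [Finset.mem_insert, Finset.mem_erase]
        constructor
        · intro hk
          by_cases k1 : k = n - 1
          · exact Or.inl k1
          · by_cases k2 : k = n
            · exact Or.inr (Or.inl k2)
            · exact Or.inr (Or.inr ⟨k1, k2, hk⟩)
        · rintro (rfl | rfl | ⟨_, _, hk⟩)
          · exact hn1A'
          · exact hnA
          · exact hk
    · simp only [hn1A, ↓reduceIte]
      rw [mul_zero, if_neg, neg_zero]
      intro hcon
      apply hn1A
      rw [congrArg Subtype.val hcon]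
      exact Finset.mem_erase.2 ⟨by omega, by simp⟩
  · rw [if_neg hnA, if_neg, neg_zero]
    intro hcon
    apply hnA
    rw [congrArg Subtype.val hcon]
    exact Finset.mem_insert_of_mem (Finset.mem_insert_self n _)

lemma Xop_top_zero (hn : 3 ≤ n) (X : SIdx n)
    (h : n - 1 ∈ (X : Finset ℕ) ∨ n ∈ (X : Finset ℕ)) :
    Xop n n (eB n X) = 0 := by
  rw [Xop, if_pos rfl]
  funext A
  simp only [LinearMap.comp_apply, adag, LinearMap.coe_mk, AddHom.coe_mk, Pi.zero_apply,
    coe_eraseIdx]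
  by_cases hnA : n ∈ (A : Finset ℕ)
  · rw [if_pos hnA]
    by_cases hn1A : n - 1 ∈ (A : Finset ℕ).erase n
    · simp only [hn1A, ↓reduceIte]
      rw [eB_apply, if_neg, mul_zero, mul_zero]
      intro hcon
      have hc : (((A : Finset ℕ).erase n).erase (n-1)) = (X : Finset ℕ) := by
        have := congrArg Subtype.val hcon
        simpa [coe_eraseIdx] using this
      rcases h with h | h
      · apply Finset.notMem_erase (n-1) ((A : Finset ℕ).erase n)
        rw [hc]; exact h
      · apply Finset.notMem_erase n (A : Finset ℕ)
        apply Finset.mem_of_mem_erase (s := (A : Finset ℕ).erase n)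
        rw [hc]; exact h
    · simp only [hn1A, ↓reduceIte]
      rw [mul_zero]
  · rw [if_neg hnA]

lemma Khalf_eB (q : ℝ) (i : ℕ) (ε : ℤ) (X : SIdx n) :
    Khalf n q i ε (eB n X) =
      (((q ^ ((((ε * hS n i (X : Finset ℕ)) : ℤ) : ℝ) / 2) : ℝ) : ℂ)) • eB n X := by
  funext A
  simp only [Khalf, LinearMap.coe_mk, AddHom.coe_mk, Pi.smul_apply, smul_eq_mul]
  by_cases h : A = X
  · subst h; ring
  · rw [eB_apply, if_neg h, mul_zero, mul_zero]

end Lemmas2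
section Lemmas3

variable {n : ℕ}

lemma tensor_cancel (x y : Sp n) (c1 c2 : ℂ) (h : c1 + c2 = 0) :
    c1 • (x ⊗ₜ[ℂ] y) + c2 • (x ⊗ₜ[ℂ] y) = 0 := by
  rw [← add_smul, h, zero_smul]

lemma I1_swap (n i : ℕ) {S : Finset ℕ} (hi : i ∉ S) (hi1 : i + 1 ∈ S) :
    I1 n (insert i (S.erase (i+1))) = I1 n S - 1 := by
  have hins : i ∉ S.erase (i+1) := fun h => hi (Finset.mem_of_mem_erase h)
  have hc : (insert i (S.erase (i+1))).card = S.card := by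
    rw [Finset.card_insert_of_notMem hins, Finset.card_erase_of_mem hi1]
    have : 1 ≤ S.card := Finset.card_pos.2 ⟨i+1, hi1⟩
    omega
  unfold I1
  rw [hc, Finset.sum_insert hins, Finset.sum_erase_eq_sub hi1]
  push_cast
  ring

lemma I1_top (n : ℕ) (hn : 3 ≤ n) {S : Finset ℕ} (h1 : n - 1 ∉ S) (h2 : n ∉ S) :
    I1 n (insert (n-1) (insert n S)) = I1 n S - 1 := by
  have hn1 : n - 1 ∉ insert n S := by
    simp only [Finset.mem_insert]
    push_neg
    exact ⟨by omega, h1⟩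
  unfold I1
  rw [Finset.card_insert_of_notMem hn1, Finset.card_insert_of_notMem h2,
    Finset.sum_insert hn1, Finset.sum_insert h2]
  have hcast : ((n - 1 : ℕ) : ℤ) = (n : ℤ) - 1 := by omega
  rw [hcast]
  push_cast
  ring

def swapLow (n i : ℕ) (hi1 : 1 ≤ i) (hin : i < n) (p : SIdx n × SIdx n) :
    SIdx n × SIdx n :=
  (⟨insert i ((p.1 : Finset ℕ).erase (i+1)),
    Finset.mem_powerset.2 (Finset.insert_subset (by simp [Finset.mem_Icc]; omega)
      ((Finset.erase_subset _ _).trans (subset_of_memS p.1)))⟩,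
   ⟨insert (i+1) ((p.2 : Finset ℕ).erase i),
    Finset.mem_powerset.2 (Finset.insert_subset (by simp [Finset.mem_Icc]; omega)
      ((Finset.erase_subset _ _).trans (subset_of_memS p.2)))⟩)

def swapLowInv (n i : ℕ) (hi1 : 1 ≤ i) (hin : i < n) (p : SIdx n × SIdx n) :
    SIdx n × SIdx n :=
  (⟨insert (i+1) ((p.1 : Finset ℕ).erase i),
    Finset.mem_powerset.2 (Finset.insert_subset (by simp [Finset.mem_Icc]; omega)
      ((Finset.erase_subset _ _).trans (subset_of_memS p.1)))⟩,
   ⟨insert i ((p.2 : Finset ℕ).erase (i+1)),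
    Finset.mem_powerset.2 (Finset.insert_subset (by simp [Finset.mem_Icc]; omega)
      ((Finset.erase_subset _ _).trans (subset_of_memS p.2)))⟩)

def swapTop (n : ℕ) (hn : 3 ≤ n) (p : SIdx n × SIdx n) : SIdx n × SIdx n :=
  (⟨insert (n-1) (insert n (p.1 : Finset ℕ)),
    Finset.mem_powerset.2 (Finset.insert_subset (by simp [Finset.mem_Icc]; omega)
      (Finset.insert_subset (by simp [Finset.mem_Icc]; omega) (subset_of_memS p.1)))⟩,
   ⟨((p.2 : Finset ℕ).erase (n-1)).erase n,
    Finset.mem_powerset.2 ((Finset.erase_subset _ _).trans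
      ((Finset.erase_subset _ _).trans (subset_of_memS p.2)))⟩)

def swapTopInv (n : ℕ) (hn : 3 ≤ n) (p : SIdx n × SIdx n) : SIdx n × SIdx n :=
  (⟨((p.1 : Finset ℕ).erase (n-1)).erase n,
    Finset.mem_powerset.2 ((Finset.erase_subset _ _).trans
      ((Finset.erase_subset _ _).trans (subset_of_memS p.1)))⟩,
   ⟨insert (n-1) (insert n (p.2 : Finset ℕ)),
    Finset.mem_powerset.2 (Finset.insert_subset (by simp [Finset.mem_Icc]; omega)
      (Finset.insert_subset (by simp [Finset.mem_Icc]; omega) (subset_of_memS p.2)))⟩)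

lemma pair_iff {p : SIdx n × SIdx n}
    (hI : (p.1 : Finset ℕ) ∩ (p.2 : Finset ℕ) = {1}) (k : ℕ) :
    k ∈ (p.1 : Finset ℕ) ∧ k ∈ (p.2 : Finset ℕ) ↔ k = 1 := by
  rw [← Finset.mem_inter, hI, Finset.mem_singleton]

lemma pair_cover {p : SIdx n × SIdx n}
    (hu : (p.1 : Finset ℕ) ∪ (p.2 : Finset ℕ) = Finset.Icc 1 n) {k : ℕ}
    (h1 : 1 ≤ k) (h2 : k ≤ n) : k ∈ (p.1 : Finset ℕ) ∨ k ∈ (p.2 : Finset ℕ) := by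
  rw [← Finset.mem_union, hu, Finset.mem_Icc]
  omega

end Lemmas3
section Lemmas4

variable {n : ℕ}

lemma card_insert_erase {S : Finset ℕ} {a b : ℕ} (ha : a ∈ S) (hb : b ∉ S) :
    (insert b (S.erase a)).card = S.card := by
  rw [Finset.card_insert_of_notMem (fun h => hb (Finset.mem_of_mem_erase h)),
    Finset.card_erase_of_mem ha]
  have : 1 ≤ S.card := Finset.card_pos.2 ⟨a, ha⟩
  omega

lemma key_scalar (q : ℝ) (hq : 0 < q) (m : ℤ) :
    (-(q : ℂ)) ^ m * ((q ^ (-(1:ℝ)/2) : ℝ) : ℂ)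
      + (-(q : ℂ)) ^ (m - 1) * ((q ^ ((1:ℝ)/2) : ℝ) : ℂ) = 0 := by
  have hq0 : (-(q : ℂ)) ≠ 0 := by
    simp only [ne_eq, neg_eq_zero, Complex.ofReal_eq_zero]
    exact ne_of_gt hq
  have hrel : (q : ℝ) ^ ((1:ℝ)/2) = q * q ^ (-(1:ℝ)/2) := by
    have h := Real.rpow_add hq 1 (-(1:ℝ)/2)
    rw [Real.rpow_one] at h
    rw [← h]
    norm_num
  have hc : ((q ^ ((1:ℝ)/2) : ℝ) : ℂ) = (q : ℂ) * ((q ^ (-(1:ℝ)/2) : ℝ) : ℂ) := by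
    rw [← Complex.ofReal_mul]
    exact_mod_cast congrArg (fun x : ℝ => (x : ℂ)) hrel
  rw [hc, zpow_sub₀ hq0, zpow_one]
  have hq1 : (q : ℂ) ≠ 0 := by exact_mod_cast ne_of_gt hq
  field_simp
  ring

end Lemmas4
/-- `ẽ^q₁` is annihilated by `X_i ⊗ K_i^{−1/2} + K_i^{1/2} ⊗ X_i` for every `i ∈ {1,…,n}`:
it is a highest weight vector of weight `L₁` for the `U_q(so_{2n})`-action on `U₊ ⊗ U₊`. -/
theorem stmt13 (n : ℕ) (hn : 3 ≤ n) (hodd : Odd n) (q : ℝ) (hq : 0 < q)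
    (i : ℕ) (hi : i ∈ Finset.Icc 1 n) :
    (TensorProduct.map (Xop n i) (Khalf n q i (-1))
        + TensorProduct.map (Khalf n q i 1) (Xop n i)) (e1tildeQ n q) = 0 := by
  rw [Finset.mem_Icc] at hi
  obtain ⟨hi1, hin⟩ := hi
  rw [e1tildeQ, map_sum]
  have expand : ∀ p : SIdx n × SIdx n,
      (TensorProduct.map (Xop n i) (Khalf n q i (-1))
        + TensorProduct.map (Khalf n q i 1) (Xop n i))
        ((-(q : ℂ)) ^ I1 n (p.1 : Finset ℕ) • (eB n p.1 ⊗ₜ[ℂ] eB n p.2))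
      = (-(q : ℂ)) ^ I1 n (p.1 : Finset ℕ) •
          ((Xop n i (eB n p.1)) ⊗ₜ[ℂ] (Khalf n q i (-1) (eB n p.2)))
        + (-(q : ℂ)) ^ I1 n (p.1 : Finset ℕ) •
          ((Khalf n q i 1 (eB n p.1)) ⊗ₜ[ℂ] (Xop n i (eB n p.2))) := by
    intro p
    rw [LinearMap.add_apply, map_smul, map_smul, TensorProduct.map_tmul,
      TensorProduct.map_tmul]
  rw [Finset.sum_congr rfl fun p _ => expand p, Finset.sum_add_distrib]
  by_cases hcase : i = n
  · -- ===================== case i = n =====================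
    obtain rfl := hcase.symm
    have red1 : ∑ p ∈ (Finset.univ.filter (fun p : SIdx n × SIdx n =>
          (p.1 : Finset ℕ) ∪ (p.2 : Finset ℕ) = Finset.Icc 1 n ∧
          (p.1 : Finset ℕ) ∩ (p.2 : Finset ℕ) = {1} ∧ Odd (p.1 : Finset ℕ).card)).filter
          (fun p : SIdx n × SIdx n => n - 1 ∉ (p.1 : Finset ℕ) ∧ n ∉ (p.1 : Finset ℕ)),
        (-(q : ℂ)) ^ I1 n (p.1 : Finset ℕ) •
          ((Xop n n (eB n p.1)) ⊗ₜ[ℂ] (Khalf n q n (-1) (eB n p.2)))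
        = ∑ p ∈ Finset.univ.filter (fun p : SIdx n × SIdx n =>
          (p.1 : Finset ℕ) ∪ (p.2 : Finset ℕ) = Finset.Icc 1 n ∧
          (p.1 : Finset ℕ) ∩ (p.2 : Finset ℕ) = {1} ∧ Odd (p.1 : Finset ℕ).card),
        (-(q : ℂ)) ^ I1 n (p.1 : Finset ℕ) •
          ((Xop n n (eB n p.1)) ⊗ₜ[ℂ] (Khalf n q n (-1) (eB n p.2))) := by
      refine Finset.sum_filter_of_ne ?_
      intro p hp hne
      by_contra hno
      apply hne
      rw [Xop_top_zero hn p.1 (by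
        rcases not_and_or.1 hno with h | h
        · exact Or.inl (not_not.1 h)
        · exact Or.inr (not_not.1 h)), TensorProduct.zero_tmul, smul_zero]
    have red2 : ∑ p ∈ (Finset.univ.filter (fun p : SIdx n × SIdx n =>
          (p.1 : Finset ℕ) ∪ (p.2 : Finset ℕ) = Finset.Icc 1 n ∧
          (p.1 : Finset ℕ) ∩ (p.2 : Finset ℕ) = {1} ∧ Odd (p.1 : Finset ℕ).card)).filter
          (fun p : SIdx n × SIdx n => n - 1 ∉ (p.2 : Finset ℕ) ∧ n ∉ (p.2 : Finset ℕ)),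
        (-(q : ℂ)) ^ I1 n (p.1 : Finset ℕ) •
          ((Khalf n q n 1 (eB n p.1)) ⊗ₜ[ℂ] (Xop n n (eB n p.2)))
        = ∑ p ∈ Finset.univ.filter (fun p : SIdx n × SIdx n =>
          (p.1 : Finset ℕ) ∪ (p.2 : Finset ℕ) = Finset.Icc 1 n ∧
          (p.1 : Finset ℕ) ∩ (p.2 : Finset ℕ) = {1} ∧ Odd (p.1 : Finset ℕ).card),
        (-(q : ℂ)) ^ I1 n (p.1 : Finset ℕ) •
          ((Khalf n q n 1 (eB n p.1)) ⊗ₜ[ℂ] (Xop n n (eB n p.2))) := by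
      refine Finset.sum_filter_of_ne ?_
      intro p hp hne
      by_contra hno
      apply hne
      rw [Xop_top_zero hn p.2 (by
        rcases not_and_or.1 hno with h | h
        · exact Or.inl (not_not.1 h)
        · exact Or.inr (not_not.1 h)), TensorProduct.tmul_zero, smul_zero]
    rw [← red1, ← red2]
    have hbij : ∑ p ∈ (Finset.univ.filter (fun p : SIdx n × SIdx n =>
          (p.1 : Finset ℕ) ∪ (p.2 : Finset ℕ) = Finset.Icc 1 n ∧
          (p.1 : Finset ℕ) ∩ (p.2 : Finset ℕ) = {1} ∧ Odd (p.1 : Finset ℕ).card)).filter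
          (fun p : SIdx n × SIdx n => n - 1 ∉ (p.1 : Finset ℕ) ∧ n ∉ (p.1 : Finset ℕ)),
        (-(q : ℂ)) ^ I1 n ((swapTop n hn p).1 : Finset ℕ) •
          ((Khalf n q n 1 (eB n (swapTop n hn p).1)) ⊗ₜ[ℂ]
            (Xop n n (eB n (swapTop n hn p).2)))
        = ∑ p ∈ (Finset.univ.filter (fun p : SIdx n × SIdx n =>
          (p.1 : Finset ℕ) ∪ (p.2 : Finset ℕ) = Finset.Icc 1 n ∧
          (p.1 : Finset ℕ) ∩ (p.2 : Finset ℕ) = {1} ∧ Odd (p.1 : Finset ℕ).card)).filter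
          (fun p : SIdx n × SIdx n => n - 1 ∉ (p.2 : Finset ℕ) ∧ n ∉ (p.2 : Finset ℕ)),
        (-(q : ℂ)) ^ I1 n (p.1 : Finset ℕ) •
          ((Khalf n q n 1 (eB n p.1)) ⊗ₜ[ℂ] (Xop n n (eB n p.2))) := by
      refine Finset.sum_nbij' (swapTop n hn) (swapTopInv n hn) ?_ ?_ ?_ ?_ (fun _ _ => rfl)
      · -- swapTop maps into Pb-set
        intro p hp
        obtain ⟨hp0, h1, h2⟩ := Finset.mem_filter.1 hp
        obtain ⟨-, hu, hI, ho⟩ := Finset.mem_filter.1 hp0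
        have hk := pair_iff hI
        have h1' : n - 1 ∈ (p.2 : Finset ℕ) :=
          (pair_cover hu (by omega) (by omega)).resolve_left h1
        have h2' : n ∈ (p.2 : Finset ℕ) :=
          (pair_cover hu (by omega) (by omega)).resolve_left h2
        have h1m : (1:ℕ) ∈ (p.1 : Finset ℕ) := ((hk 1).2 rfl).1
        have h2m : (1:ℕ) ∈ (p.2 : Finset ℕ) := ((hk 1).2 rfl).2
        refine Finset.mem_filter.2 ⟨Finset.mem_filter.2 ⟨Finset.mem_univ _, ?_, ?_, ?_⟩,
          ?_, ?_⟩
        · -- union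
          simp only [swapTop]
          ext k
          have hkic : k ∈ Finset.Icc 1 n ↔ k ∈ (p.1 : Finset ℕ) ∨ k ∈ (p.2 : Finset ℕ) := by
            constructor
            · intro h
              have h' : k ∈ (p.1 : Finset ℕ) ∪ (p.2 : Finset ℕ) := by rw [hu]; exact h
              exact Finset.mem_union.1 h'
            · intro h
              have h' : k ∈ (p.1 : Finset ℕ) ∪ (p.2 : Finset ℕ) := Finset.mem_union.2 h
              rw [hu] at h'
              exact h'
          simp only [Finset.mem_union, Finset.mem_insert, Finset.mem_erase, hkic]
          constructor
          · rintro ((rfl | rfl | hk1) | ⟨hne1, hne2, hk2⟩)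
            · exact Or.inr h1'
            · exact Or.inr h2'
            · exact Or.inl hk1
            · exact Or.inr hk2
          · rintro (hk1 | hk2)
            · exact Or.inl (Or.inr (Or.inr hk1))
            · by_cases hke1 : k = n - 1
              · exact Or.inl (Or.inl hke1)
              · by_cases hke2 : k = n
                · exact Or.inl (Or.inr (Or.inl hke2))
                · exact Or.inr ⟨hke2, hke1, hk2⟩
        · -- intersection
          simp only [swapTop]
          ext k
          simp only [Finset.mem_inter, Finset.mem_insert, Finset.mem_erase,
            Finset.mem_singleton]
          constructor
          · rintro ⟨ha, hne1, hne2, hk2⟩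
            rcases ha with rfl | rfl | hk1
            · exact absurd rfl hne2
            · exact absurd rfl hne1
            · exact (hk k).1 ⟨hk1, hk2⟩
          · rintro rfl
            exact ⟨Or.inr (Or.inr h1m), by omega, by omega, h2m⟩
        · -- odd cardinality
          simp only [swapTop]
          rw [Finset.card_insert_of_notMem (by
              simp only [Finset.mem_insert]
              push_neg
              exact ⟨by omega, h1⟩),
            Finset.card_insert_of_notMem h2]
          obtain ⟨m, hm⟩ := ho
          exact ⟨m + 1, by omega⟩
        · -- n-1 ∉ second component
          simp only [swapTop, Finset.mem_erase]
          push_neg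
          intro h
          exact fun hc => absurd rfl hc
        · -- n ∉ second component
          simp only [swapTop, Finset.mem_erase]
          push_neg
          intro h
          exact absurd rfl h
      · -- swapTopInv maps into Pa-set
        intro p hp
        obtain ⟨hp0, h1, h2⟩ := Finset.mem_filter.1 hp
        obtain ⟨-, hu, hI, ho⟩ := Finset.mem_filter.1 hp0
        have hk := pair_iff hI
        have h1' : n - 1 ∈ (p.1 : Finset ℕ) := by
          rcases pair_cover hu (by omega : 1 ≤ n - 1) (by omega) with h | h
          · exact h
          · exact absurd h h1
        have h2' : n ∈ (p.1 : Finset ℕ) := by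
          rcases pair_cover hu (by omega : 1 ≤ n) (by omega) with h | h
          · exact h
          · exact absurd h h2
        have h1m : (1:ℕ) ∈ (p.1 : Finset ℕ) := ((hk 1).2 rfl).1
        have h2m : (1:ℕ) ∈ (p.2 : Finset ℕ) := ((hk 1).2 rfl).2
        refine Finset.mem_filter.2 ⟨Finset.mem_filter.2 ⟨Finset.mem_univ _, ?_, ?_, ?_⟩,
          ?_, ?_⟩
        · -- union
          simp only [swapTopInv]
          ext k
          have hkic : k ∈ Finset.Icc 1 n ↔ k ∈ (p.1 : Finset ℕ) ∨ k ∈ (p.2 : Finset ℕ) := by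
            constructor
            · intro h
              have h' : k ∈ (p.1 : Finset ℕ) ∪ (p.2 : Finset ℕ) := by rw [hu]; exact h
              exact Finset.mem_union.1 h'
            · intro h
              have h' : k ∈ (p.1 : Finset ℕ) ∪ (p.2 : Finset ℕ) := Finset.mem_union.2 h
              rw [hu] at h'
              exact h'
          simp only [Finset.mem_union, Finset.mem_insert, Finset.mem_erase, hkic]
          constructor
          · rintro (⟨hne1, hne2, hk1⟩ | (rfl | rfl | hk2))
            · exact Or.inl hk1
            · exact Or.inl h1'
            · exact Or.inl h2'
            · exact Or.inr hk2
          · rintro (hk1 | hk2)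
            · by_cases hke1 : k = n - 1
              · exact Or.inr (Or.inl hke1)
              · by_cases hke2 : k = n
                · exact Or.inr (Or.inr (Or.inl hke2))
                · exact Or.inl ⟨hke2, hke1, hk1⟩
            · exact Or.inr (Or.inr (Or.inr hk2))
        · -- intersection
          simp only [swapTopInv]
          ext k
          simp only [Finset.mem_inter, Finset.mem_insert, Finset.mem_erase,
            Finset.mem_singleton]
          constructor
          · rintro ⟨⟨hne1, hne2, hk1⟩, hb⟩
            rcases hb with rfl | rfl | hk2
            · exact absurd rfl hne2
            · exact absurd rfl hne1
            · exact (hk k).1 ⟨hk1, hk2⟩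
          · rintro rfl
            exact ⟨⟨by omega, by omega, h1m⟩, Or.inr (Or.inr h2m)⟩
        · -- odd cardinality
          simp only [swapTopInv]
          have hcard : 2 ≤ (p.1 : Finset ℕ).card := by
            have hss : ({n - 1, n} : Finset ℕ) ⊆ (p.1 : Finset ℕ) := by
              intro k hk2
              simp only [Finset.mem_insert, Finset.mem_singleton] at hk2
              rcases hk2 with rfl | rfl
              · exact h1'
              · exact h2'
            have := Finset.card_le_card hss
            rwa [Finset.card_insert_of_notMem (by simp; omega),
              Finset.card_singleton] at this
          rw [Finset.card_erase_of_mem (Finset.mem_erase.2 ⟨by omega, h2'⟩),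
            Finset.card_erase_of_mem h1']
          obtain ⟨m, hm⟩ := ho
          exact ⟨m - 1, by omega⟩
        · -- n-1 ∉ first component
          simp only [swapTopInv, Finset.mem_erase]
          push_neg
          intro h
          exact fun hc => absurd rfl hc
        · -- n ∉ first component
          simp only [swapTopInv, Finset.mem_erase]
          push_neg
          intro h
          exact absurd rfl h
      · -- left inverse
        intro p hp
        obtain ⟨hp0, h1, h2⟩ := Finset.mem_filter.1 hp
        obtain ⟨-, hu, hI, ho⟩ := Finset.mem_filter.1 hp0
        have h1' : n - 1 ∈ (p.2 : Finset ℕ) :=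
          (pair_cover hu (by omega) (by omega)).resolve_left h1
        have h2' : n ∈ (p.2 : Finset ℕ) :=
          (pair_cover hu (by omega) (by omega)).resolve_left h2
        simp only [swapTop, swapTopInv]
        refine Prod.ext (Subtype.ext ?_) (Subtype.ext ?_)
        · show ((insert (n-1) (insert n (p.1 : Finset ℕ))).erase (n-1)).erase n
            = (p.1 : Finset ℕ)
          rw [Finset.erase_insert (by
              simp only [Finset.mem_insert]
              push_neg
              exact ⟨by omega, h1⟩),
            Finset.erase_insert h2]
        · show insert (n-1) (insert n (((p.2 : Finset ℕ).erase (n-1)).erase n))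
            = (p.2 : Finset ℕ)
          rw [Finset.insert_erase (Finset.mem_erase.2 ⟨by omega, h2'⟩),
            Finset.insert_erase h1']
      · -- right inverse
        intro p hp
        obtain ⟨hp0, h1, h2⟩ := Finset.mem_filter.1 hp
        obtain ⟨-, hu, hI, ho⟩ := Finset.mem_filter.1 hp0
        have h1' : n - 1 ∈ (p.1 : Finset ℕ) := by
          rcases pair_cover hu (by omega : 1 ≤ n - 1) (by omega) with h | h
          · exact h
          · exact absurd h h1
        have h2' : n ∈ (p.1 : Finset ℕ) := by
          rcases pair_cover hu (by omega : 1 ≤ n) (by omega) with h | h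
          · exact h
          · exact absurd h h2
        simp only [swapTop, swapTopInv]
        refine Prod.ext (Subtype.ext ?_) (Subtype.ext ?_)
        · show insert (n-1) (insert n (((p.1 : Finset ℕ).erase (n-1)).erase n))
            = (p.1 : Finset ℕ)
          rw [Finset.insert_erase (Finset.mem_erase.2 ⟨by omega, h2'⟩),
            Finset.insert_erase h1']
        · show ((insert (n-1) (insert n (p.2 : Finset ℕ))).erase (n-1)).erase n
            = (p.2 : Finset ℕ)
          rw [Finset.erase_insert (by
              simp only [Finset.mem_insert]
              push_neg
              exact ⟨by omega, h1⟩),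
            Finset.erase_insert h2]
    rw [← hbij, ← Finset.sum_add_distrib]
    refine Finset.sum_eq_zero ?_
    intro p hp
    obtain ⟨hp0, h1, h2⟩ := Finset.mem_filter.1 hp
    obtain ⟨-, hu, hI, ho⟩ := Finset.mem_filter.1 hp0
    have hk := pair_iff hI
    have h1' : n - 1 ∈ (p.2 : Finset ℕ) :=
      (pair_cover hu (by omega) (by omega)).resolve_left h1
    have h2' : n ∈ (p.2 : Finset ℕ) :=
      (pair_cover hu (by omega) (by omega)).resolve_left h2
    have ha : Xop n n (eB n p.1) = -eB n (swapTop n hn p).1 := by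
      rw [Xop_top hn p.1 h1 h2]
      rfl
    have hb : Xop n n (eB n (swapTop n hn p).2) = -eB n p.2 := by
      rw [Xop_top hn (swapTop n hn p).2
        (by simp only [swapTop, Finset.mem_erase]
            push_neg
            intro h
            exact fun hc => absurd rfl hc)
        (by simp only [swapTop, Finset.mem_erase]
            push_neg
            intro h
            exact absurd rfl h)]
      refine congrArg (fun v => -eB n v) (Subtype.ext ?_)
      show insert (n-1) (insert n (((p.2 : Finset ℕ).erase (n-1)).erase n))
        = (p.2 : Finset ℕ)
      rw [Finset.insert_erase (Finset.mem_erase.2 ⟨by omega, h2'⟩),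
        Finset.insert_erase h1']
    have hs2 : hS n n (p.2 : Finset ℕ) = 1 := by
      simp only [hS, if_pos rfl]
      rw [if_pos h1', if_pos h2']
      norm_num
    have hs1 : hS n n ((swapTop n hn p).1 : Finset ℕ) = 1 := by
      simp only [hS, if_pos rfl, swapTop]
      simp only [Finset.mem_insert_self, Finset.mem_insert_of_mem, ↓reduceIte]
      norm_num
    rw [ha, hb, Khalf_eB, Khalf_eB, hs1, hs2]
    have he1 : (((-1 : ℤ) * 1 : ℤ) : ℝ) / 2 = -(1:ℝ)/2 := by norm_num
    have he2 : (((1 : ℤ) * 1 : ℤ) : ℝ) / 2 = (1:ℝ)/2 := by norm_num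
    rw [he1, he2, TensorProduct.tmul_smul, TensorProduct.neg_tmul,
      TensorProduct.tmul_neg, ← TensorProduct.smul_tmul', smul_neg, smul_neg, smul_neg,
      smul_smul, smul_smul, ← neg_smul, ← neg_smul]
    refine tensor_cancel _ _ _ _ ?_
    have hI1 : I1 n ((swapTop n hn p).1 : Finset ℕ) = I1 n (p.1 : Finset ℕ) - 1 := by
      simp only [swapTop]
      exact I1_top n hn h1 h2
    rw [hI1]
    have := key_scalar q hq (I1 n (p.1 : Finset ℕ))
    linear_combination -this
  · -- ===================== case i < n =====================
    have hilt : i < n := by omega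
    by_cases hone : i = 1
    · -- case i = 1 : all terms vanish
      subst hone
      have z1 : ∀ p : SIdx n × SIdx n, p ∈ Finset.univ.filter (fun p : SIdx n × SIdx n =>
          (p.1 : Finset ℕ) ∪ (p.2 : Finset ℕ) = Finset.Icc 1 n ∧
          (p.1 : Finset ℕ) ∩ (p.2 : Finset ℕ) = {1} ∧ Odd (p.1 : Finset ℕ).card) →
          (-(q : ℂ)) ^ I1 n (p.1 : Finset ℕ) •
            ((Xop n 1 (eB n p.1)) ⊗ₜ[ℂ] (Khalf n q 1 (-1) (eB n p.2))) = 0 := by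
        intro p hp
        obtain ⟨-, hu, hI, ho⟩ := Finset.mem_filter.1 hp
        have h11 : (1:ℕ) ∈ (p.1 : Finset ℕ) := ((pair_iff hI 1).2 rfl).1
        rw [Xop_low_zero 1 hilt p.1 (Or.inl h11), TensorProduct.zero_tmul, smul_zero]
      have z2 : ∀ p : SIdx n × SIdx n, p ∈ Finset.univ.filter (fun p : SIdx n × SIdx n =>
          (p.1 : Finset ℕ) ∪ (p.2 : Finset ℕ) = Finset.Icc 1 n ∧
          (p.1 : Finset ℕ) ∩ (p.2 : Finset ℕ) = {1} ∧ Odd (p.1 : Finset ℕ).card) →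
          (-(q : ℂ)) ^ I1 n (p.1 : Finset ℕ) •
            ((Khalf n q 1 1 (eB n p.1)) ⊗ₜ[ℂ] (Xop n 1 (eB n p.2))) = 0 := by
        intro p hp
        obtain ⟨-, hu, hI, ho⟩ := Finset.mem_filter.1 hp
        have h12 : (1:ℕ) ∈ (p.2 : Finset ℕ) := ((pair_iff hI 1).2 rfl).2
        rw [Xop_low_zero 1 hilt p.2 (Or.inl h12), TensorProduct.tmul_zero, smul_zero]
      rw [Finset.sum_eq_zero z1, Finset.sum_eq_zero z2, add_zero]
    · -- case 2 ≤ i < n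
      have hi2 : 2 ≤ i := by omega
      have red1 : ∑ p ∈ (Finset.univ.filter (fun p : SIdx n × SIdx n =>
            (p.1 : Finset ℕ) ∪ (p.2 : Finset ℕ) = Finset.Icc 1 n ∧
            (p.1 : Finset ℕ) ∩ (p.2 : Finset ℕ) = {1} ∧ Odd (p.1 : Finset ℕ).card)).filter
            (fun p : SIdx n × SIdx n => i ∉ (p.1 : Finset ℕ) ∧ i + 1 ∈ (p.1 : Finset ℕ)),
          (-(q : ℂ)) ^ I1 n (p.1 : Finset ℕ) •
            ((Xop n i (eB n p.1)) ⊗ₜ[ℂ] (Khalf n q i (-1) (eB n p.2)))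
          = ∑ p ∈ Finset.univ.filter (fun p : SIdx n × SIdx n =>
            (p.1 : Finset ℕ) ∪ (p.2 : Finset ℕ) = Finset.Icc 1 n ∧
            (p.1 : Finset ℕ) ∩ (p.2 : Finset ℕ) = {1} ∧ Odd (p.1 : Finset ℕ).card),
          (-(q : ℂ)) ^ I1 n (p.1 : Finset ℕ) •
            ((Xop n i (eB n p.1)) ⊗ₜ[ℂ] (Khalf n q i (-1) (eB n p.2))) := by
        refine Finset.sum_filter_of_ne ?_
        intro p hp hne
        by_contra hno
        apply hne
        rw [Xop_low_zero i hilt p.1 (by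
          rcases not_and_or.1 hno with h | h
          · exact Or.inl (not_not.1 h)
          · exact Or.inr h), TensorProduct.zero_tmul, smul_zero]
      have red2 : ∑ p ∈ (Finset.univ.filter (fun p : SIdx n × SIdx n =>
            (p.1 : Finset ℕ) ∪ (p.2 : Finset ℕ) = Finset.Icc 1 n ∧
            (p.1 : Finset ℕ) ∩ (p.2 : Finset ℕ) = {1} ∧ Odd (p.1 : Finset ℕ).card)).filter
            (fun p : SIdx n × SIdx n => i ∉ (p.2 : Finset ℕ) ∧ i + 1 ∈ (p.2 : Finset ℕ)),
          (-(q : ℂ)) ^ I1 n (p.1 : Finset ℕ) •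
            ((Khalf n q i 1 (eB n p.1)) ⊗ₜ[ℂ] (Xop n i (eB n p.2)))
          = ∑ p ∈ Finset.univ.filter (fun p : SIdx n × SIdx n =>
            (p.1 : Finset ℕ) ∪ (p.2 : Finset ℕ) = Finset.Icc 1 n ∧
            (p.1 : Finset ℕ) ∩ (p.2 : Finset ℕ) = {1} ∧ Odd (p.1 : Finset ℕ).card),
          (-(q : ℂ)) ^ I1 n (p.1 : Finset ℕ) •
            ((Khalf n q i 1 (eB n p.1)) ⊗ₜ[ℂ] (Xop n i (eB n p.2))) := by
        refine Finset.sum_filter_of_ne ?_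
        intro p hp hne
        by_contra hno
        apply hne
        rw [Xop_low_zero i hilt p.2 (by
          rcases not_and_or.1 hno with h | h
          · exact Or.inl (not_not.1 h)
          · exact Or.inr h), TensorProduct.tmul_zero, smul_zero]
      rw [← red1, ← red2]
      have hbij : ∑ p ∈ (Finset.univ.filter (fun p : SIdx n × SIdx n =>
            (p.1 : Finset ℕ) ∪ (p.2 : Finset ℕ) = Finset.Icc 1 n ∧
            (p.1 : Finset ℕ) ∩ (p.2 : Finset ℕ) = {1} ∧ Odd (p.1 : Finset ℕ).card)).filter
            (fun p : SIdx n × SIdx n => i ∉ (p.1 : Finset ℕ) ∧ i + 1 ∈ (p.1 : Finset ℕ)),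
          (-(q : ℂ)) ^ I1 n ((swapLow n i hi1 hilt p).1 : Finset ℕ) •
            ((Khalf n q i 1 (eB n (swapLow n i hi1 hilt p).1)) ⊗ₜ[ℂ]
              (Xop n i (eB n (swapLow n i hi1 hilt p).2)))
          = ∑ p ∈ (Finset.univ.filter (fun p : SIdx n × SIdx n =>
            (p.1 : Finset ℕ) ∪ (p.2 : Finset ℕ) = Finset.Icc 1 n ∧
            (p.1 : Finset ℕ) ∩ (p.2 : Finset ℕ) = {1} ∧ Odd (p.1 : Finset ℕ).card)).filter
            (fun p : SIdx n × SIdx n => i ∉ (p.2 : Finset ℕ) ∧ i + 1 ∈ (p.2 : Finset ℕ)),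
          (-(q : ℂ)) ^ I1 n (p.1 : Finset ℕ) •
            ((Khalf n q i 1 (eB n p.1)) ⊗ₜ[ℂ] (Xop n i (eB n p.2))) := by
        refine Finset.sum_nbij' (swapLow n i hi1 hilt) (swapLowInv n i hi1 hilt)
          ?_ ?_ ?_ ?_ (fun _ _ => rfl)
        · -- swapLow maps Pa-set into Pb-set
          intro p hp
          obtain ⟨hp0, h1, h2⟩ := Finset.mem_filter.1 hp
          obtain ⟨-, hu, hI, ho⟩ := Finset.mem_filter.1 hp0
          have hk := pair_iff hI
          have h1' : i ∈ (p.2 : Finset ℕ) :=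
            (pair_cover hu hi1 (by omega)).resolve_left h1
          have h2' : i + 1 ∉ (p.2 : Finset ℕ) := fun hc => by
            have := (hk (i+1)).1 ⟨h2, hc⟩; omega
          have h1m : (1:ℕ) ∈ (p.1 : Finset ℕ) := ((hk 1).2 rfl).1
          have h2m : (1:ℕ) ∈ (p.2 : Finset ℕ) := ((hk 1).2 rfl).2
          refine Finset.mem_filter.2 ⟨Finset.mem_filter.2 ⟨Finset.mem_univ _, ?_, ?_, ?_⟩,
            ?_, ?_⟩
          · -- union
            simp only [swapLow]
            ext k
            have hkic : k ∈ Finset.Icc 1 n ↔ k ∈ (p.1 : Finset ℕ) ∨ k ∈ (p.2 : Finset ℕ) := by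
              constructor
              · intro h
                have h' : k ∈ (p.1 : Finset ℕ) ∪ (p.2 : Finset ℕ) := by rw [hu]; exact h
                exact Finset.mem_union.1 h'
              · intro h
                have h' : k ∈ (p.1 : Finset ℕ) ∪ (p.2 : Finset ℕ) := Finset.mem_union.2 h
                rw [hu] at h'
                exact h'
            simp only [Finset.mem_union, Finset.mem_insert, Finset.mem_erase, hkic]
            constructor
            · rintro ((rfl | ⟨hne, hk1⟩) | (rfl | ⟨hne, hk2⟩))
              · exact Or.inr h1'
              · exact Or.inl hk1
              · exact Or.inl h2
              · exact Or.inr hk2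
            · rintro (hk1 | hk2)
              · by_cases hke : k = i + 1
                · exact Or.inr (Or.inl hke)
                · exact Or.inl (Or.inr ⟨hke, hk1⟩)
              · by_cases hke : k = i
                · exact Or.inl (Or.inl hke)
                · exact Or.inr (Or.inr ⟨hke, hk2⟩)
          · -- intersection
            simp only [swapLow]
            ext k
            simp only [Finset.mem_inter, Finset.mem_insert, Finset.mem_erase,
              Finset.mem_singleton]
            constructor
            · rintro ⟨ha, hb⟩
              rcases ha with rfl | ⟨hne1, hk1⟩
              · rcases hb with hb | ⟨hne2, hk2⟩
                · omega
                · exact absurd rfl hne2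
              · rcases hb with rfl | ⟨hne2, hk2⟩
                · exact absurd rfl hne1
                · exact (hk k).1 ⟨hk1, hk2⟩
            · rintro rfl
              exact ⟨Or.inr ⟨by omega, h1m⟩, Or.inr ⟨by omega, h2m⟩⟩
          · -- odd cardinality
            simp only [swapLow]
            rw [card_insert_erase h2 h1]
            exact ho
          · -- i ∉ second component
            simp only [swapLow, Finset.mem_insert, Finset.mem_erase]
            push_neg
            exact ⟨by omega, fun h => absurd rfl h⟩
          · -- i+1 ∈ second component
            simp only [swapLow]
            exact Finset.mem_insert_self _ _
        · -- swapLowInv maps Pb-set into Pa-set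
          intro p hp
          obtain ⟨hp0, h1, h2⟩ := Finset.mem_filter.1 hp
          obtain ⟨-, hu, hI, ho⟩ := Finset.mem_filter.1 hp0
          have hk := pair_iff hI
          have h1' : i ∈ (p.1 : Finset ℕ) := by
            rcases pair_cover hu hi1 (by omega) with h | h
            · exact h
            · exact absurd h h1
          have h2' : i + 1 ∉ (p.1 : Finset ℕ) := fun hc => by
            have := (hk (i+1)).1 ⟨hc, h2⟩; omega
          have h1m : (1:ℕ) ∈ (p.1 : Finset ℕ) := ((hk 1).2 rfl).1
          have h2m : (1:ℕ) ∈ (p.2 : Finset ℕ) := ((hk 1).2 rfl).2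
          refine Finset.mem_filter.2 ⟨Finset.mem_filter.2 ⟨Finset.mem_univ _, ?_, ?_, ?_⟩,
            ?_, ?_⟩
          · -- union
            simp only [swapLowInv]
            ext k
            have hkic : k ∈ Finset.Icc 1 n ↔ k ∈ (p.1 : Finset ℕ) ∨ k ∈ (p.2 : Finset ℕ) := by
              constructor
              · intro h
                have h' : k ∈ (p.1 : Finset ℕ) ∪ (p.2 : Finset ℕ) := by rw [hu]; exact h
                exact Finset.mem_union.1 h'
              · intro h
                have h' : k ∈ (p.1 : Finset ℕ) ∪ (p.2 : Finset ℕ) := Finset.mem_union.2 h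
                rw [hu] at h'
                exact h'
            simp only [Finset.mem_union, Finset.mem_insert, Finset.mem_erase, hkic]
            constructor
            · rintro ((rfl | ⟨hne, hk1⟩) | (rfl | ⟨hne, hk2⟩))
              · exact Or.inr h2
              · exact Or.inl hk1
              · exact Or.inl h1'
              · exact Or.inr hk2
            · rintro (hk1 | hk2)
              · by_cases hke : k = i
                · exact Or.inr (Or.inl hke)
                · exact Or.inl (Or.inr ⟨hke, hk1⟩)
              · by_cases hke : k = i + 1
                · exact Or.inl (Or.inl hke)
                · exact Or.inr (Or.inr ⟨hke, hk2⟩)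
          · -- intersection
            simp only [swapLowInv]
            ext k
            simp only [Finset.mem_inter, Finset.mem_insert, Finset.mem_erase,
              Finset.mem_singleton]
            constructor
            · rintro ⟨ha, hb⟩
              rcases ha with rfl | ⟨hne1, hk1⟩
              · rcases hb with hb | ⟨hne2, hk2⟩
                · omega
                · exact absurd rfl hne2
              · rcases hb with rfl | ⟨hne2, hk2⟩
                · exact absurd rfl hne1
                · exact (hk k).1 ⟨hk1, hk2⟩
            · rintro rfl
              exact ⟨Or.inr ⟨by omega, h1m⟩, Or.inr ⟨by omega, h2m⟩⟩
          · -- odd cardinality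
            simp only [swapLowInv]
            rw [card_insert_erase h1' h2']
            exact ho
          · -- i ∉ first component
            simp only [swapLowInv, Finset.mem_insert, Finset.mem_erase]
            push_neg
            exact ⟨by omega, fun h => absurd rfl h⟩
          · -- i+1 ∈ first component
            simp only [swapLowInv]
            exact Finset.mem_insert_self _ _
        · -- left inverse
          intro p hp
          obtain ⟨hp0, h1, h2⟩ := Finset.mem_filter.1 hp
          obtain ⟨-, hu, hI, ho⟩ := Finset.mem_filter.1 hp0
          have hk := pair_iff hI
          have h1' : i ∈ (p.2 : Finset ℕ) :=
            (pair_cover hu hi1 (by omega)).resolve_left h1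
          have h2' : i + 1 ∉ (p.2 : Finset ℕ) := fun hc => by
            have := (hk (i+1)).1 ⟨h2, hc⟩; omega
          simp only [swapLow, swapLowInv]
          refine Prod.ext (Subtype.ext ?_) (Subtype.ext ?_)
          · show insert (i+1) ((insert i ((p.1 : Finset ℕ).erase (i+1))).erase i)
              = (p.1 : Finset ℕ)
            rw [Finset.erase_insert (fun h => h1 (Finset.mem_of_mem_erase h)),
              Finset.insert_erase h2]
          · show insert i ((insert (i+1) ((p.2 : Finset ℕ).erase i)).erase (i+1))
              = (p.2 : Finset ℕ)
            rw [Finset.erase_insert (fun h => h2' (Finset.mem_of_mem_erase h)),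
              Finset.insert_erase h1']
        · -- right inverse
          intro p hp
          obtain ⟨hp0, h1, h2⟩ := Finset.mem_filter.1 hp
          obtain ⟨-, hu, hI, ho⟩ := Finset.mem_filter.1 hp0
          have hk := pair_iff hI
          have h1' : i ∈ (p.1 : Finset ℕ) := by
            rcases pair_cover hu hi1 (by omega) with h | h
            · exact h
            · exact absurd h h1
          have h2' : i + 1 ∉ (p.1 : Finset ℕ) := fun hc => by
            have := (hk (i+1)).1 ⟨hc, h2⟩; omega
          simp only [swapLow, swapLowInv]
          refine Prod.ext (Subtype.ext ?_) (Subtype.ext ?_)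
          · show insert i ((insert (i+1) ((p.1 : Finset ℕ).erase i)).erase (i+1))
              = (p.1 : Finset ℕ)
            rw [Finset.erase_insert (fun h => h2' (Finset.mem_of_mem_erase h)),
              Finset.insert_erase h1']
          · show insert (i+1) ((insert i ((p.2 : Finset ℕ).erase (i+1))).erase i)
              = (p.2 : Finset ℕ)
            rw [Finset.erase_insert (fun h => h1 (Finset.mem_of_mem_erase h)),
              Finset.insert_erase h2]
      rw [← hbij, ← Finset.sum_add_distrib]
      refine Finset.sum_eq_zero ?_
      intro p hp
      obtain ⟨hp0, h1, h2⟩ := Finset.mem_filter.1 hp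
      obtain ⟨-, hu, hI, ho⟩ := Finset.mem_filter.1 hp0
      have hk := pair_iff hI
      have h1' : i ∈ (p.2 : Finset ℕ) :=
        (pair_cover hu hi1 (by omega)).resolve_left h1
      have h2' : i + 1 ∉ (p.2 : Finset ℕ) := fun hc => by
        have := (hk (i+1)).1 ⟨h2, hc⟩; omega
      have ha : Xop n i (eB n p.1) = eB n (swapLow n i hi1 hilt p).1 := by
        rw [Xop_low i hi1 hilt p.1 h1 h2]
        rfl
      have hb : Xop n i (eB n (swapLow n i hi1 hilt p).2) = eB n p.2 := by
        rw [Xop_low i hi1 hilt (swapLow n i hi1 hilt p).2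
          (by simp only [swapLow, Finset.mem_insert, Finset.mem_erase]
              push_neg
              exact ⟨by omega, fun h => absurd rfl h⟩)
          (by simp only [swapLow]
              exact Finset.mem_insert_self _ _)]
        apply congrArg (eB n)
        apply Subtype.ext
        show insert i ((insert (i+1) ((p.2 : Finset ℕ).erase i)).erase (i+1))
          = (p.2 : Finset ℕ)
        rw [Finset.erase_insert (fun h => h2' (Finset.mem_of_mem_erase h)),
          Finset.insert_erase h1']
      have hs2 : hS n i (p.2 : Finset ℕ) = 1 := by
        simp only [hS, if_neg hcase]
        rw [if_pos h1', if_neg h2']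
        norm_num
      have hs1 : hS n i ((swapLow n i hi1 hilt p).1 : Finset ℕ) = 1 := by
        simp only [hS, if_neg hcase, swapLow]
        have hm : ¬ (i + 1 ∈ insert i ((p.1 : Finset ℕ).erase (i + 1))) := by
          simp only [Finset.mem_insert, Finset.mem_erase]
          push_neg
          exact ⟨by omega, fun h => absurd rfl h⟩
        simp only [Finset.mem_insert_self, hm, ↓reduceIte]
        norm_num
      rw [ha, hb, Khalf_eB, Khalf_eB, hs1, hs2]
      have he1 : (((-1 : ℤ) * 1 : ℤ) : ℝ) / 2 = -(1:ℝ)/2 := by norm_num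
      have he2 : (((1 : ℤ) * 1 : ℤ) : ℝ) / 2 = (1:ℝ)/2 := by norm_num
      rw [he1, he2, TensorProduct.tmul_smul, ← TensorProduct.smul_tmul', smul_smul,
        smul_smul]
      refine tensor_cancel _ _ _ _ ?_
      have hI1 : I1 n ((swapLow n i hi1 hilt p).1 : Finset ℕ)
          = I1 n (p.1 : Finset ℕ) - 1 := by
        simp only [swapLow]
        exact I1_swap n i h1 h2
      rw [hI1]
      exact key_scalar q hq (I1 n (p.1 : Finset ℕ))

end
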